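/- Neural ODEs cannot represent annulus-vs-ball labeling: for any homeomorphism φ : ℝᵈ → ℝᵈ and any affine map L(x) = ⟨w,x⟩ + b, the composed function g(x) = L(φ(x)) cannot satisfy g(x) ≤ −1 for all ‖x‖ ≤ r₁ and g(x) ≥ 1 for all r₂ ≤ ‖x‖ ≤ r₃, where 0 < r₁ < r₂ < r₃. -/

import Mathlib

/-- Neural ODEs cannot represent the annulus-vs-ball labeling: for any
homeomorphism `φ` of `ℝᵈ` and any affine map `L x = ⟨w, x⟩ + b`, the function
`g = L ∘ φ` cannot be `≤ -1` on the ball `‖x‖ ≤ r₁` and `≥ 1` on the annulus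
`r₂ ≤ ‖x‖ ≤ r₃`, where `0 < r₁ < r₂ < r₃`. -/
theorem stmt_11 {d : ℕ} (hd : 0 < d) (r₁ r₂ r₃ : ℝ)
    (h0 : 0 < r₁) (h12 : r₁ < r₂) (h23 : r₂ < r₃)
    (φ : EuclideanSpace ℝ (Fin d) ≃ₜ EuclideanSpace ℝ (Fin d))
    (w : EuclideanSpace ℝ (Fin d)) (b : ℝ) :
    ¬ ((∀ x : EuclideanSpace ℝ (Fin d), ‖x‖ ≤ r₁ →
          (inner ℝ w (φ x) : ℝ) + b ≤ -1) ∧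
       (∀ x : EuclideanSpace ℝ (Fin d), r₂ ≤ ‖x‖ → ‖x‖ ≤ r₃ →
          (inner ℝ w (φ x) : ℝ) + b ≥ 1)) := by
  rintro ⟨h1, h2⟩
  by_cases hw : w = 0
  · -- w = 0 : g is constant b; use 0 and a point of norm r₂
    have hb1 : b ≤ -1 := by have := h1 0 (by simp [h0.le]); rw [hw, inner_zero_left] at this; linarith
    have hr2 : (0:ℝ) < r₂ := h0.trans h12
    set x₀ : EuclideanSpace ℝ (Fin d) := EuclideanSpace.single (⟨0, hd⟩ : Fin d) r₂ with hx₀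
    have hx : ‖x₀‖ = r₂ := by
      simp [hx₀, EuclideanSpace.norm_single, abs_of_pos hr2]
    have hb2 : (1:ℝ) ≤ b := by
      have := h2 x₀ hx.ge (hx.le.trans h23.le); rw [hw, inner_zero_left] at this; linarith
    linarith
  · -- w ≠ 0
    have hwn : (0:ℝ) < ‖w‖ := norm_pos_iff.mpr hw
    -- bound on image of closed ball
    have hcomp : IsCompact (φ '' Metric.closedBall (0:EuclideanSpace ℝ (Fin d)) r₃) :=
      (isCompact_closedBall (0:EuclideanSpace ℝ (Fin d)) r₃).image φ.continuous
    obtain ⟨C, hC⟩ := hcomp.isBounded.exists_norm_le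
    have hC0 : 0 ≤ C := by
      have := hC (φ 0) ⟨0, by simp [le_of_lt (by linarith : (0:ℝ) < r₃)], rfl⟩
      exact (norm_nonneg _).trans this
    set t : ℝ := max ((b + 1) / ‖w‖ ^ 2) ((C + 1) / ‖w‖) with ht
    have ht1 : (b + 1) / ‖w‖ ^ 2 ≤ t := le_max_left _ _
    have ht2 : (C + 1) / ‖w‖ ≤ t := le_max_right _ _
    have htpos : 0 < t := lt_of_lt_of_le (div_pos (by linarith) hwn) ht2
    set y : EuclideanSpace ℝ (Fin d) := (-t) • w with hy
    have hinner : (inner ℝ w y : ℝ) = -t * ‖w‖ ^ 2 := by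
      rw [hy, real_inner_smul_right, real_inner_self_eq_norm_sq]
    have hyhalf : (inner ℝ w y : ℝ) + b ≤ -1 := by
      have : b + 1 ≤ t * ‖w‖ ^ 2 := by
        rw [div_le_iff₀ (by positivity)] at ht1; linarith
      rw [hinner]; nlinarith
    have hynorm : C < ‖y‖ := by
      have : C + 1 ≤ t * ‖w‖ := by
        rw [div_le_iff₀ hwn] at ht2; linarith
      have hn : ‖y‖ = t * ‖w‖ := by
        rw [hy, norm_smul, norm_neg, Real.norm_eq_abs, abs_of_pos htpos]
      linarith [hn ▸ this]
    set x' : EuclideanSpace ℝ (Fin d) := φ.symm y with hx'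
    have hgx' : (inner ℝ w (φ x') : ℝ) + b ≤ -1 := by
      rwa [hx', φ.apply_symm_apply]
    have hx'norm : r₃ < ‖x'‖ := by
      by_contra h
      push_neg at h
      have : y ∈ φ '' Metric.closedBall (0:EuclideanSpace ℝ (Fin d)) r₃ :=
        ⟨x', by simpa using h, by rw [hx', φ.apply_symm_apply]⟩
      exact absurd (hC y this) (not_le.mpr hynorm)
    -- the path
    set γ : ℝ → EuclideanSpace ℝ (Fin d) := fun s => φ.symm ((1 - s) • φ 0 + s • y) with hγ
    have hcont : ContinuousOn (fun s => ‖γ s‖) (Set.Icc 0 1) := by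
      apply Continuous.continuousOn
      fun_prop
    have hγ0 : ‖γ 0‖ = 0 := by simp [hγ]
    have hγ1 : ‖γ 1‖ = ‖x'‖ := by simp [hγ, hx']
    have hmem : r₂ ∈ Set.Icc ‖γ 0‖ ‖γ 1‖ := by
      rw [hγ0, hγ1]
      exact ⟨by linarith, by linarith⟩
    obtain ⟨s, hs, hseq⟩ := intermediate_value_Icc (by norm_num : (0:ℝ) ≤ 1) hcont hmem
    -- g (γ s) ≤ -1 by convexity
    have hA : (inner ℝ w (φ 0) : ℝ) + b ≤ -1 := h1 0 (by simp [h0.le])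
    have hgγ : (inner ℝ w (φ (γ s)) : ℝ) + b ≤ -1 := by
      have : φ (γ s) = (1 - s) • φ 0 + s • y := by rw [hγ, φ.apply_symm_apply]
      rw [this, inner_add_right, real_inner_smul_right, real_inner_smul_right]
      obtain ⟨hs0, hs1⟩ := hs
      nlinarith
    have hgγ' : (inner ℝ w (φ (γ s)) : ℝ) + b ≥ 1 :=
      h2 (γ s) hseq.ge (hseq.le.trans h23.le)
    linarith
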